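/- Let Y₁, Y₀ be absolutely continuous random variables with densities f₁, f₀ (finite means) satisfying the location family assumption f₀(y) = f₁(y + Δ), and let R₁, R₀ be binary missingness indicators satisfying the strong MNAR assumption: conditional on R_a = 0, Y_a < F_a^{-1}(α) almost surely, where α > max(P(R₁=0), P(R₀=0)). Define composite outcomes U_a = Y_a if R_a = 1 and U_a = c_a otherwise with c_a < F_a^{-1}(α). Then E[U₁ | U₁ > F_{U₁}^{-1}(α)] − E[U₀ | U₀ > F_{U₀}^{-1}(α)] = E[Y₁] − E[Y₀]. -/

import Mathlib

open MeasureTheory ProbabilityTheory Set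

noncomputable def quant (F : ℝ → ℝ) (α : ℝ) : ℝ := sInf {x | α ≤ F x}

noncomputable def condMeanAbove {Ω : Type*} [MeasurableSpace Ω]
    (μ : Measure Ω) (X : Ω → ℝ) (q : ℝ) : ℝ :=
  (∫ ω in {ω | q < X ω}, X ω ∂μ) / (μ {ω | q < X ω}).toReal


open Filter Topology
open scoped ENNReal NNReal

/-- Right continuity style bound for CDF-type sets. -/
lemma right_bound {Ω : Type*} [MeasurableSpace Ω] (μ : Measure Ω) [IsFiniteMeasure μ]
    {X : Ω → ℝ} (hX : Measurable X) {t : ℝ} {a : ℝ≥0∞}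
    (h : ∀ s, t < s → a ≤ μ {ω | X ω ≤ s}) : a ≤ μ {ω | X ω ≤ t} := by
  have hseq : ∀ n : ℕ, t < t + 1 / (n + 1 : ℝ) := fun n =>
    lt_add_of_pos_right _ (by positivity)
  have hInter : ⋂ n : ℕ, {ω | X ω ≤ t + 1 / (n + 1 : ℝ)} = {ω | X ω ≤ t} := by
    ext ω
    simp only [mem_iInter, mem_setOf_eq]
    constructor
    · intro hall
      by_contra hlt
      push_neg at hlt
      obtain ⟨n, hn⟩ := exists_nat_one_div_lt (sub_pos.mpr hlt)
      have := hall n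
      linarith
    · intro h n; exact h.trans (hseq n).le
  have hmono : Antitone fun n : ℕ => {ω | X ω ≤ t + 1 / (n + 1 : ℝ)} := by
    intro m n hmn
    have h1 : (1 : ℝ) / (n + 1) ≤ 1 / (m + 1) := by
      apply one_div_le_one_div_of_le (by positivity)
      exact_mod_cast add_le_add_left (Nat.cast_le.mpr hmn) 1
    intro ω hω
    simp only [mem_setOf_eq] at *
    linarith
  have htend := tendsto_measure_iInter_atTop
    (μ := μ) (s := fun n : ℕ => {ω | X ω ≤ t + 1 / (n + 1 : ℝ)})
    (fun n => ((hX measurableSet_Iic).nullMeasurableSet : NullMeasurableSet _ μ)) hmono ⟨0, measure_ne_top μ _⟩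
  rw [hInter] at htend
  exact ge_of_tendsto htend (Eventually.of_forall fun n => h _ (hseq n))

/-- Left continuity style bound. -/
lemma left_bound {Ω : Type*} [MeasurableSpace Ω] (μ : Measure Ω)
    {X : Ω → ℝ} {t : ℝ} {a : ℝ≥0∞}
    (h : ∀ s, s < t → μ {ω | X ω ≤ s} ≤ a) : μ {ω | X ω < t} ≤ a := by
  have hseq : ∀ n : ℕ, t - 1 / (n + 1 : ℝ) < t := fun n =>
    sub_lt_self _ (by positivity)
  have hUnion : ⋃ n : ℕ, {ω | X ω ≤ t - 1 / (n + 1 : ℝ)} = {ω | X ω < t} := by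
    ext ω
    simp only [mem_iUnion, mem_setOf_eq]
    constructor
    · rintro ⟨n, hn⟩; exact lt_of_le_of_lt hn (hseq n)
    · intro hlt
      obtain ⟨n, hn⟩ := exists_nat_one_div_lt (sub_pos.mpr hlt)
      exact ⟨n, by linarith⟩
  have hmono : Monotone fun n : ℕ => {ω | X ω ≤ t - 1 / (n + 1 : ℝ)} := by
    intro m n hmn
    have h1 : (1 : ℝ) / (n + 1) ≤ 1 / (m + 1) := by
      apply one_div_le_one_div_of_le (by positivity)
      exact_mod_cast add_le_add_left (Nat.cast_le.mpr hmn) 1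
    intro ω hω
    simp only [mem_setOf_eq] at *
    linarith
  have htend := tendsto_measure_iUnion_atTop
    (μ := μ) (s := fun n : ℕ => {ω | X ω ≤ t - 1 / (n + 1 : ℝ)}) hmono
  rw [hUnion] at htend
  exact le_of_tendsto htend (Eventually.of_forall fun n => h _ (hseq n))

lemma tendsto_cdf_top {Ω : Type*} [MeasurableSpace Ω] (μ : Measure Ω) (X : Ω → ℝ) :
    Tendsto (fun n : ℕ => μ {ω | X ω ≤ (n : ℝ)}) atTop (𝓝 (μ univ)) := by
  have hmono : Monotone fun n : ℕ => {ω | X ω ≤ (n : ℝ)} := by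
    intro m n hmn ω hω
    simp only [mem_setOf_eq] at *
    exact hω.trans (Nat.cast_le.mpr hmn)
  have htend := tendsto_measure_iUnion_atTop (μ := μ) hmono
  have hU : ⋃ n : ℕ, {ω | X ω ≤ (n : ℝ)} = univ := by
    ext ω
    simp only [mem_iUnion, mem_setOf_eq, mem_univ, iff_true]
    exact exists_nat_ge (X ω)
  rwa [hU] at htend

lemma tendsto_cdf_bot {Ω : Type*} [MeasurableSpace Ω] (μ : Measure Ω) [IsFiniteMeasure μ]
    {X : Ω → ℝ} (hX : Measurable X) :
    Tendsto (fun n : ℕ => μ {ω | X ω ≤ -(n : ℝ)}) atTop (𝓝 0) := by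
  have hmono : Antitone fun n : ℕ => {ω | X ω ≤ -(n : ℝ)} := by
    intro m n hmn ω hω
    simp only [mem_setOf_eq] at *
    exact hω.trans (neg_le_neg (Nat.cast_le.mpr hmn))
  have htend := tendsto_measure_iInter_atTop (μ := μ)
    (s := fun n : ℕ => {ω | X ω ≤ -(n : ℝ)})
    (fun n => (hX measurableSet_Iic).nullMeasurableSet) hmono ⟨0, measure_ne_top μ _⟩
  have hI : ⋂ n : ℕ, {ω | X ω ≤ -(n : ℝ)} = (∅ : Set Ω) := by
    ext ω
    simp only [mem_iInter, mem_setOf_eq, mem_empty_iff_false, iff_false, not_forall, not_le]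
    obtain ⟨n, hn⟩ := exists_nat_gt (-X ω)
    exact ⟨n, by linarith⟩
  rw [hI] at htend
  simpa [Function.comp_def] using htend

lemma quant_shift (F : ℝ → ℝ) (α Δ : ℝ) (hne : {x | α ≤ F x}.Nonempty)
    (hbdd : BddBelow {x | α ≤ F x}) :
    quant (fun x => F (x + Δ)) α = quant F α - Δ := by
  unfold quant
  have h1 : {x | α ≤ F (x + Δ)} = (fun x => x - Δ) '' {x | α ≤ F x} := by
    ext x
    simp only [mem_setOf_eq, mem_image]
    constructor
    · intro h; exact ⟨x + Δ, h, by ring⟩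
    · rintro ⟨y, hy, rfl⟩; simpa [sub_add_cancel] using hy
  rw [h1]
  have hglb := isGLB_csInf hne hbdd
  have : IsGLB ((fun x => x - Δ) '' {x | α ≤ F x}) (sInf {x | α ≤ F x} - Δ) := by
    constructor
    · rintro _ ⟨y, hy, rfl⟩
      have := hglb.1 hy
      simpa using sub_le_sub_right this Δ
    · intro b hb
      have hB : b + Δ ∈ lowerBounds {x | α ≤ F x} := by
        intro y hy
        have := hb ⟨y, hy, rfl⟩
        simp only at this
        linarith
      have := hglb.2 hB
      linarith
  exact this.csInf_eq (hne.image _)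

lemma integral_shift (g : ℝ → ℝ) (Δ : ℝ) (s : Set ℝ) (hs : MeasurableSet s)
    (t : Set ℝ) (ht : MeasurableSet t) (hst : ∀ y : ℝ, y ∈ s ↔ y + Δ ∈ t) :
    ∫ y in s, g (y + Δ) = ∫ y in t, g y := by
  have key : ∀ y : ℝ, t.indicator g (y + Δ) = s.indicator (fun z => g (z + Δ)) y := by
    intro y
    by_cases h : y ∈ s
    · rw [indicator_of_mem h, indicator_of_mem ((hst y).mp h)]
    · rw [indicator_of_notMem h, indicator_of_notMem (fun hc => h ((hst y).mpr hc))]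
  rw [← integral_indicator hs, ← integral_indicator ht]
  rw [← integral_add_right_eq_self (t.indicator g) Δ]
  exact integral_congr_ae (Eventually.of_forall fun y => (key y).symm)

lemma arm {Ω : Type*} [MeasurableSpace Ω] (μ : Measure Ω) [IsProbabilityMeasure μ]
    (Y : Ω → ℝ) (R : Ω → Bool) (f : ℝ → ℝ) (α c : ℝ)
    (hY : Measurable Y) (hR : Measurable R) (hf0 : ∀ y, 0 ≤ f y)
    (hYd : ∀ x, μ {ω | Y ω ≤ x} = ENNReal.ofReal (∫ y in Iic x, f y))
    (hm : Integrable (fun y => y * f y))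
    (hα : α ∈ Ioo (0:ℝ) 1)
    (F : ℝ → ℝ) (hF : F = fun x => (μ {ω | Y ω ≤ x}).toReal)
    (hMNAR : ∀ᵐ ω ∂μ, R ω = false → Y ω < quant F α)
    (hc : c < quant F α)
    (U : Ω → ℝ) (hU : U = fun ω => if R ω then Y ω else c)
    (FU : ℝ → ℝ) (hFU : FU = fun x => (μ {ω | U ω ≤ x}).toReal) :
    Integrable f volume ∧ (∫ y, f y) = 1 ∧ (∫ y in Iic (quant F α), f y) = α ∧
    (∫ ω, Y ω ∂μ) = (∫ y, y * f y) ∧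
    {x | α ≤ F x}.Nonempty ∧ BddBelow {x | α ≤ F x} ∧
    condMeanAbove μ U (quant FU α) = (∫ y in Ioi (quant F α), y * f y) / (1 - α) := by
  obtain ⟨hα0, hα1⟩ := hα
  set q := quant F α with hqdef
  -- a.e. measurability of f
  have hfae : AEMeasurable f (volume : Measure ℝ) := by
    have h1 : AEMeasurable (fun y => (y * f y) * y⁻¹) (volume : Measure ℝ) :=
      hm.1.aemeasurable.mul (measurable_inv.aemeasurable)
    refine h1.congr ?_
    have hne : ∀ᵐ y : ℝ ∂volume, y ≠ 0 := by
      rw [ae_iff]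
      simp only [ne_eq, not_not]
      have : {y : ℝ | y = 0} = {0} := by ext; simp
      rw [this]
      exact Real.volume_singleton
    filter_upwards [hne] with y hy
    field_simp
  -- integrability on each Iic
  have hIic : ∀ x : ℝ, IntegrableOn f (Iic x) := by
    by_contra hcon
    push_neg at hcon
    obtain ⟨x₀, hx₀⟩ := hcon
    have hzero : ∀ x, x₀ ≤ x → μ {ω | Y ω ≤ x} = 0 := by
      intro x hx
      have hni : ¬ IntegrableOn f (Iic x) := fun h => hx₀ (h.mono_set (Iic_subset_Iic.mpr hx))
      rw [hYd x, integral_undef hni, ENNReal.ofReal_zero]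
    have huniv : (univ : Set Ω) ⊆ ⋃ n : ℕ, {ω | Y ω ≤ x₀ + n} := by
      intro ω _
      obtain ⟨n, hn⟩ := exists_nat_ge (Y ω - x₀)
      exact mem_iUnion.mpr ⟨n, by simp only [mem_setOf_eq]; linarith⟩
    have h0 : μ univ = 0 :=
      measure_mono_null huniv (measure_iUnion_null fun n =>
        hzero _ (le_add_of_nonneg_right (Nat.cast_nonneg n)))
    simp [measure_univ] at h0
  -- the density measure
  set ν : Measure ℝ := volume.withDensity (fun y => ENNReal.ofReal (f y)) with hν
  have hνIic : ∀ x, ν (Iic x) = μ {ω | Y ω ≤ x} := by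
    intro x
    rw [hν, withDensity_apply _ measurableSet_Iic, hYd x,
      ofReal_integral_eq_lintegral_ofReal (hIic x) (Eventually.of_forall fun y => hf0 y)]
  have htop := tendsto_cdf_top μ Y
  rw [measure_univ] at htop
  have hνuniv : ν univ = 1 := by
    have h2 : Tendsto (fun n : ℕ => ν (Iic (n : ℝ))) atTop (𝓝 (ν univ)) := by
      have hmono : Monotone fun n : ℕ => (Iic (n : ℝ)) := by
        intro m n hmn x hx
        simp only [mem_Iic] at *
        exact le_trans hx (Nat.cast_le.mpr hmn)
      have h3 := tendsto_measure_iUnion_atTop (μ := ν) hmono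
      have hU : ⋃ n : ℕ, Iic (n : ℝ) = univ := by
        ext x
        simp only [mem_iUnion, mem_Iic, mem_univ, iff_true]
        exact exists_nat_ge x
      rwa [hU] at h3
    have h4 : Tendsto (fun n : ℕ => ν (Iic (n : ℝ))) atTop (𝓝 1) := by
      simp only [hνIic]
      exact htop
    exact tendsto_nhds_unique h2 h4
  have hνprob : IsProbabilityMeasure ν := ⟨hνuniv⟩
  have hmap : Measure.map Y μ = ν := by
    refine Measure.ext_of_Iic _ _ (fun a => ?_)
    rw [Measure.map_apply hY measurableSet_Iic]
    exact (hνIic a).symm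
  -- f is integrable with total integral 1
  have hofealt : (fun y => ENNReal.ofReal (f y)) = fun y => ((Real.toNNReal (f y) : ℝ≥0) : ℝ≥0∞) := rfl
  have hνlint : ∫⁻ y, ENNReal.ofReal (f y) = 1 := by
    rw [← hνuniv, hν, withDensity_apply _ MeasurableSet.univ, Measure.restrict_univ]
  have hint_f : Integrable f volume := by
    refine ⟨hfae.aestronglyMeasurable, ?_⟩
    rw [HasFiniteIntegral]
    have heq : ∀ y, (‖f y‖₊ : ℝ≥0∞) = ENNReal.ofReal (f y) := fun y => Real.enorm_eq_ofReal (hf0 y)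
    calc ∫⁻ y, (‖f y‖₊ : ℝ≥0∞) = ∫⁻ y, ENNReal.ofReal (f y) := by simp_rw [heq]
    _ = 1 := hνlint
    _ < ⊤ := ENNReal.one_lt_top
  have hsum : ∫ y, f y = 1 := by
    have h1 := ofReal_integral_eq_lintegral_ofReal hint_f (Eventually.of_forall hf0)
    rw [hνlint] at h1
    exact ENNReal.ofReal_eq_one.mp h1
  have htoNN : AEMeasurable (fun y => Real.toNNReal (f y)) (volume : Measure ℝ) :=
    measurable_real_toNNReal.comp_aemeasurable hfae
  -- integrability of Y and the mean identity
  have hid : Integrable (fun y => y) ν := by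
    rw [hν, hofealt, integrable_withDensity_iff_integrable_coe_smul₀ htoNN]
    have : (fun y : ℝ => ((Real.toNNReal (f y) : ℝ)) • y) = fun y => y * f y := by
      funext y
      rw [smul_eq_mul, Real.coe_toNNReal _ (hf0 y), mul_comm]
    rw [this]
    exact hm
  have hYint : Integrable Y μ := by
    have h1 : Integrable (fun y => y) (Measure.map Y μ) := hmap ▸ hid
    exact (integrable_map_measure aestronglyMeasurable_id hY.aemeasurable).mp h1
  have hmean : ∫ ω, Y ω ∂μ = ∫ y, y * f y := by
    have h1 : ∫ ω, Y ω ∂μ = ∫ y, y ∂(Measure.map Y μ) :=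
      (integral_map hY.aemeasurable aestronglyMeasurable_id).symm
    rw [h1, hmap, hν, hofealt, integral_withDensity_eq_integral_smul₀ htoNN]
    congr 1
    funext y
    rw [NNReal.smul_def, smul_eq_mul, Real.coe_toNNReal _ (hf0 y), mul_comm]
  -- F facts
  have hFmono : Monotone F := by
    intro a b hab
    rw [hF]
    exact ENNReal.toReal_mono (measure_ne_top μ _)
      (measure_mono (fun ω h => le_trans h hab))
  have hofF : ∀ x, ENNReal.ofReal (F x) = μ {ω | Y ω ≤ x} := fun x => by
    rw [hF]; exact ENNReal.ofReal_toReal (measure_ne_top μ _)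
  have hFnn : ∀ x, 0 ≤ F x := fun x => by rw [hF]; exact ENNReal.toReal_nonneg
  have hSne : {x | α ≤ F x}.Nonempty := by
    have h1 : Tendsto (fun n : ℕ => F (n : ℝ)) atTop (𝓝 1) := by
      rw [hF]
      have := (ENNReal.tendsto_toReal ENNReal.one_ne_top).comp htop
      simpa [Function.comp_def] using this
    obtain ⟨n, hn⟩ := (h1.eventually (eventually_gt_nhds hα1)).exists
    exact ⟨(n : ℝ), hn.le⟩
  have hSbdd : BddBelow {x | α ≤ F x} := by
    have h1 : Tendsto (fun n : ℕ => F (-(n : ℝ))) atTop (𝓝 0) := by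
      rw [hF]
      have := (ENNReal.tendsto_toReal ENNReal.zero_ne_top).comp (tendsto_cdf_bot μ hY)
      simpa [Function.comp_def] using this
    obtain ⟨n, hn⟩ := (h1.eventually (eventually_lt_nhds hα0)).exists
    refine ⟨-(n : ℝ), fun s hs => ?_⟩
    by_contra hlt
    push_neg at hlt
    exact absurd (le_trans hs (hFmono hlt.le)) (not_le.mpr hn)
  have hq_lt : ∀ x, x < q → F x < α := by
    intro x hx
    by_contra h
    push_neg at h
    exact absurd (csInf_le hSbdd h) (not_le.mpr hx)
  have hq_gt : ∀ x, q < x → α ≤ F x := by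
    intro x hx
    obtain ⟨s, hsS, hsx⟩ := exists_lt_of_csInf_lt hSne hx
    exact le_trans hsS (hFmono hsx.le)
  -- μ {Y ≤ q} = ofReal α
  have hq_meas : μ {ω | Y ω ≤ q} = ENNReal.ofReal α := by
    apply le_antisymm
    · have hatom : μ {ω | Y ω = q} = 0 := by
        have h1 : {ω | Y ω = q} = Y ⁻¹' {q} := rfl
        rw [h1, ← Measure.map_apply hY (measurableSet_singleton q), hmap, hν,
          withDensity_apply _ (measurableSet_singleton q),
          Measure.restrict_eq_zero.mpr Real.volume_singleton, lintegral_zero_measure]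
      have hlt : μ {ω | Y ω < q} ≤ ENNReal.ofReal α := by
        apply left_bound
        intro s hs
        rw [← hofF]
        exact ENNReal.ofReal_le_ofReal (hq_lt s hs).le
      calc μ {ω | Y ω ≤ q} ≤ μ ({ω | Y ω < q} ∪ {ω | Y ω = q}) := by
            apply measure_mono
            intro ω hω
            rcases lt_or_eq_of_le (show Y ω ≤ q from hω) with h | h
            · exact Or.inl h
            · exact Or.inr h
      _ ≤ μ {ω | Y ω < q} + μ {ω | Y ω = q} := measure_union_le _ _
      _ = μ {ω | Y ω < q} := by rw [hatom, add_zero]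
      _ ≤ ENNReal.ofReal α := hlt
    · apply right_bound μ hY
      intro s hs
      rw [← hofF]
      exact ENNReal.ofReal_le_ofReal (hq_gt s hs)
  have hIicq : ∫ y in Iic q, f y = α := by
    have h1 := hYd q
    rw [hq_meas] at h1
    have h2 : 0 ≤ ∫ y in Iic q, f y := setIntegral_nonneg measurableSet_Iic fun y _ => hf0 y
    exact ((ENNReal.ofReal_eq_ofReal_iff hα0.le h2).mp h1).symm
  -- MNAR null set
  have hN : μ ({ω | R ω = false} ∩ {ω | q ≤ Y ω}) = 0 := by
    rw [ae_iff] at hMNAR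
    refine measure_mono_null ?_ hMNAR
    rintro ω ⟨h1, h2⟩
    simp only [mem_setOf_eq, not_forall, not_lt]
    exact ⟨h1, h2⟩
  -- U facts
  have hUm : Measurable U := by
    rw [hU]
    exact Measurable.ite (hR (MeasurableSet.singleton true)) hY measurable_const
  have hFUmono : Monotone FU := by
    intro a b hab
    rw [hFU]
    exact ENNReal.toReal_mono (measure_ne_top μ _)
      (measure_mono (fun ω h => le_trans h hab))
  have hofFU : ∀ x, ENNReal.ofReal (FU x) = μ {ω | U ω ≤ x} := fun x => by
    rw [hFU]; exact ENNReal.ofReal_toReal (measure_ne_top μ _)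
  have hq_in : α ≤ FU q := by
    have hsub : {ω | Y ω ≤ q} ⊆ {ω | U ω ≤ q} := by
      intro ω h
      simp only [mem_setOf_eq] at *
      rw [hU]
      by_cases hRω : R ω = true
      · simp [hRω]; exact h
      · simp [hRω]; exact hc.le
    have h1 : ENNReal.ofReal α ≤ ENNReal.ofReal (FU q) := by
      rw [hofFU, ← hq_meas]
      exact measure_mono hsub
    exact (ENNReal.ofReal_le_ofReal_iff (by rw [hFU]; exact ENNReal.toReal_nonneg)).mp h1
  have hFUlow : ∀ s, s < c → FU s < α := by
    intro s hs
    have hsub : {ω | U ω ≤ s} ⊆ {ω | Y ω ≤ s} := by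
      intro ω h
      simp only [mem_setOf_eq] at *
      rw [hU] at h
      by_cases hRω : R ω = true
      · simpa [hRω] using h
      · simp [hRω] at h; linarith
    have h1 : μ {ω | U ω ≤ s} ≤ μ {ω | Y ω ≤ s} := measure_mono hsub
    have h2 : FU s ≤ F s := by
      rw [hFU, hF]
      exact ENNReal.toReal_mono (measure_ne_top μ _) h1
    exact lt_of_le_of_lt h2 (hq_lt s (hs.trans hc))
  have hS'ne : {x | α ≤ FU x}.Nonempty := ⟨q, hq_in⟩
  have hS'bdd : BddBelow {x | α ≤ FU x} := by
    refine ⟨c, fun s hs => ?_⟩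
    by_contra hlt
    push_neg at hlt
    exact absurd hs (not_le.mpr (hFUlow s hlt))
  set q' := quant FU α with hq'def
  have hq'le : q' ≤ q := csInf_le hS'bdd hq_in
  have hcq' : c ≤ q' := le_csInf hS'ne fun s hs => by
    by_contra hlt
    push_neg at hlt
    exact absurd hs (not_le.mpr (hFUlow s hlt))
  -- μ {U ≤ q'} = ofReal α
  have hU_meas : μ {ω | U ω ≤ q'} = ENNReal.ofReal α := by
    apply le_antisymm
    · refine le_trans (measure_mono (?_ :
        {ω | U ω ≤ q'} ⊆ {ω | Y ω ≤ q} ∪ ({ω | R ω = false} ∩ {ω | q ≤ Y ω}))) ?_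
      · intro ω hω
        by_cases hRω : R ω = true
        · left
          simp only [mem_setOf_eq] at hω ⊢
          have hUY : U ω = Y ω := by rw [hU]; simp [hRω]
          rw [← hUY]
          exact le_trans hω hq'le
        · by_cases hYω : Y ω ≤ q
          · exact Or.inl hYω
          · right
            refine ⟨by simpa using hRω, le_of_not_ge hYω⟩
      · calc μ ({ω | Y ω ≤ q} ∪ ({ω | R ω = false} ∩ {ω | q ≤ Y ω}))
            ≤ μ {ω | Y ω ≤ q} + μ ({ω | R ω = false} ∩ {ω | q ≤ Y ω}) := measure_union_le _ _
        _ = ENNReal.ofReal α := by rw [hq_meas, hN, add_zero]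
    · apply right_bound μ hUm
      intro s hs
      obtain ⟨s', hs'S, hs's⟩ := exists_lt_of_csInf_lt hS'ne hs
      calc ENNReal.ofReal α ≤ ENNReal.ofReal (FU s') := ENNReal.ofReal_le_ofReal hs'S
      _ = μ {ω | U ω ≤ s'} := hofFU s'
      _ ≤ μ {ω | U ω ≤ s} := measure_mono fun ω h => le_trans h hs's.le
  have hcompl : μ {ω | q' < U ω} = ENNReal.ofReal (1 - α) := by
    have hcset : {ω | q' < U ω} = {ω | U ω ≤ q'}ᶜ := by
      ext ω; simp [not_le]
    have hmc := measure_compl (μ := μ) (s := {ω | U ω ≤ q'}) (hUm measurableSet_Iic)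
      (measure_ne_top μ _)
    rw [hcset, hmc, measure_univ, hU_meas,
      ← ENNReal.ofReal_one, ← ENNReal.ofReal_sub _ hα0.le]
  set p := μ {ω | R ω = false} with hpdef
  have hRfalse_meas : MeasurableSet {ω | R ω = false} := hR (MeasurableSet.singleton false)
  have hRtrue_meas : MeasurableSet {ω | R ω = true} := hR (MeasurableSet.singleton true)
  have hAeq : μ ({ω | R ω = true} ∩ {ω | Y ω ≤ q'}) + p = ENNReal.ofReal α := by
    rw [← hU_meas]
    have hsplit : {ω | U ω ≤ q'} = ({ω | R ω = true} ∩ {ω | Y ω ≤ q'}) ∪ {ω | R ω = false} := by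
      ext ω
      simp only [hU, mem_setOf_eq, mem_union, mem_inter_iff]
      cases hRω : R ω
      · simp [hcq']
      · simp
    have hd0 : Disjoint ({ω | R ω = true} ∩ {ω | Y ω ≤ q'}) {ω | R ω = false} := by
      rw [Set.disjoint_left]
      rintro ω ⟨h1, _⟩ h2
      simp only [mem_setOf_eq] at h1 h2
      rw [h1] at h2
      simp at h2
    rw [hsplit, measure_union hd0 hRfalse_meas]
  have hBeq : μ ({ω | R ω = true} ∩ {ω | Y ω ≤ q}) + p = ENNReal.ofReal α := by
    have h1 : μ ({ω | R ω = false} ∩ {ω | Y ω ≤ q}) = p := by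
      apply le_antisymm (measure_mono inter_subset_left)
      have hsub : {ω | R ω = false} ⊆
          ({ω | R ω = false} ∩ {ω | Y ω ≤ q}) ∪ ({ω | R ω = false} ∩ {ω | q ≤ Y ω}) := by
        intro ω hω
        rcases le_total (Y ω) q with h | h
        · exact Or.inl ⟨hω, h⟩
        · exact Or.inr ⟨hω, h⟩
      calc p ≤ μ (({ω | R ω = false} ∩ {ω | Y ω ≤ q}) ∪ ({ω | R ω = false} ∩ {ω | q ≤ Y ω})) :=
            measure_mono hsub
      _ ≤ μ ({ω | R ω = false} ∩ {ω | Y ω ≤ q}) + μ ({ω | R ω = false} ∩ {ω | q ≤ Y ω}) :=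
            measure_union_le _ _
      _ = μ ({ω | R ω = false} ∩ {ω | Y ω ≤ q}) := by rw [hN, add_zero]
    have h2 : {ω | Y ω ≤ q} =
        ({ω | R ω = true} ∩ {ω | Y ω ≤ q}) ∪ ({ω | R ω = false} ∩ {ω | Y ω ≤ q}) := by
      ext ω
      simp only [mem_setOf_eq, mem_union, mem_inter_iff]
      cases hRω : R ω <;> simp
    have hmeasB : MeasurableSet ({ω | R ω = false} ∩ {ω | Y ω ≤ q}) :=
      hRfalse_meas.inter (hY measurableSet_Iic)
    have hd : Disjoint ({ω | R ω = true} ∩ {ω | Y ω ≤ q}) ({ω | R ω = false} ∩ {ω | Y ω ≤ q}) := by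
      rw [Set.disjoint_left]
      rintro ω ⟨hω1, _⟩ ⟨hω2, _⟩
      simp only [mem_setOf_eq] at hω1 hω2
      rw [hω1] at hω2
      simp at hω2
    have hABu := measure_union (μ := μ) hd hmeasB
    have h3 : μ {ω | Y ω ≤ q} = μ ({ω | R ω = true} ∩ {ω | Y ω ≤ q}) +
        μ ({ω | R ω = false} ∩ {ω | Y ω ≤ q}) := by
      conv_lhs => rw [h2]
      exact hABu
    rw [← h1, ← h3, hq_meas]
  have hM : μ ({ω | R ω = true} ∩ {ω | q' < Y ω} ∩ {ω | Y ω ≤ q}) = 0 := by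
    have hsplit2 : {ω | R ω = true} ∩ {ω | Y ω ≤ q} =
        ({ω | R ω = true} ∩ {ω | Y ω ≤ q'}) ∪
          ({ω | R ω = true} ∩ {ω | q' < Y ω} ∩ {ω | Y ω ≤ q}) := by
      ext ω
      simp only [mem_union, mem_inter_iff, mem_setOf_eq]
      constructor
      · rintro ⟨h1, h2⟩
        rcases le_or_gt (Y ω) q' with h | h
        · exact Or.inl ⟨h1, h⟩
        · exact Or.inr ⟨⟨h1, h⟩, h2⟩
      · rintro (⟨h1, h2⟩ | ⟨⟨h1, h2⟩, h3⟩)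
        · exact ⟨h1, le_trans h2 hq'le⟩
        · exact ⟨h1, h3⟩
    have hdisj2 : Disjoint ({ω | R ω = true} ∩ {ω | Y ω ≤ q'})
        ({ω | R ω = true} ∩ {ω | q' < Y ω} ∩ {ω | Y ω ≤ q}) := by
      rw [Set.disjoint_left]
      rintro ω ⟨_, hω1⟩ ⟨⟨_, hω2⟩, _⟩
      simp only [mem_setOf_eq] at hω1 hω2
      exact absurd hω1 (not_le.mpr hω2)
    have hmeas2 : MeasurableSet ({ω | R ω = true} ∩ {ω | q' < Y ω} ∩ {ω | Y ω ≤ q}) :=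
      (hRtrue_meas.inter (hY measurableSet_Ioi)).inter (hY measurableSet_Iic)
    have hBM : μ ({ω | R ω = true} ∩ {ω | Y ω ≤ q}) =
        μ ({ω | R ω = true} ∩ {ω | Y ω ≤ q'}) +
          μ ({ω | R ω = true} ∩ {ω | q' < Y ω} ∩ {ω | Y ω ≤ q}) := by
      rw [hsplit2]
      exact measure_union hdisj2 hmeas2
    have hcomb : μ ({ω | R ω = true} ∩ {ω | Y ω ≤ q'}) + p =
        (μ ({ω | R ω = true} ∩ {ω | Y ω ≤ q'}) +
          μ ({ω | R ω = true} ∩ {ω | q' < Y ω} ∩ {ω | Y ω ≤ q})) + p := by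
      rw [← hBM, hAeq, hBeq]
    rw [ENNReal.add_left_inj (measure_ne_top μ _)] at hcomb
    have h0 : μ ({ω | R ω = true} ∩ {ω | Y ω ≤ q'}) +
        μ ({ω | R ω = true} ∩ {ω | q' < Y ω} ∩ {ω | Y ω ≤ q}) =
        μ ({ω | R ω = true} ∩ {ω | Y ω ≤ q'}) + 0 := by
      rw [add_zero]; exact hcomb.symm
    exact (ENNReal.add_right_inj (measure_ne_top μ _)).mp h0
  have hUint : Integrable U μ := by
    refine Integrable.mono' (hYint.abs.add (integrable_const |c|))
      hUm.aestronglyMeasurable (Eventually.of_forall fun ω => ?_)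
    simp only [hU, Real.norm_eq_abs]
    cases hRω : R ω
    · simp only [hRω, Bool.false_eq_true, if_false, Pi.add_apply]
      have : (0:ℝ) ≤ |Y ω| := abs_nonneg _
      linarith
    · simp only [hRω, if_true, Pi.add_apply]
      have : (0:ℝ) ≤ |c| := abs_nonneg _
      linarith
  have hset : {ω | q' < U ω} = {ω | R ω = true} ∩ {ω | q' < Y ω} := by
    ext ω
    simp only [hU, mem_setOf_eq, mem_inter_iff]
    cases hRω : R ω
    · simp [not_lt.mpr hcq']
    · simp
  have hae : {ω | q' < U ω} =ᵐ[μ] {ω | q < Y ω} := by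
    rw [hset, MeasureTheory.ae_eq_set]
    constructor
    · refine measure_mono_null ?_ hM
      rintro ω ⟨⟨h1, h2⟩, h3⟩
      simp only [mem_setOf_eq] at *
      exact ⟨⟨h1, h2⟩, not_lt.mp h3⟩
    · refine measure_mono_null ?_ hN
      rintro ω ⟨h1, h2⟩
      simp only [mem_setOf_eq, mem_inter_iff, not_and, not_lt] at *
      constructor
      · by_contra hRω
        rw [Bool.not_eq_false] at hRω
        have := h2 hRω
        have h3 : q' < Y ω := lt_of_le_of_lt hq'le h1
        exact absurd this (not_le.mpr h3)
      · exact h1.le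
  have hInt : ∫ ω in {ω | q' < U ω}, U ω ∂μ = ∫ ω in {ω | q < Y ω}, Y ω ∂μ := by
    have h1 : ∫ ω in {ω | q' < U ω}, U ω ∂μ = ∫ ω in {ω | q' < U ω}, Y ω ∂μ := by
      apply setIntegral_congr_fun (hUm measurableSet_Ioi)
      intro ω hω
      have hω' : ω ∈ {ω | q' < U ω} := hω
      rw [hset] at hω'
      simp only [hU]
      rw [if_pos (show R ω = true from hω'.1)]
    rw [h1]
    exact setIntegral_congr_set hae
  have hTail : ∫ ω in {ω | q < Y ω}, Y ω ∂μ = ∫ y in Ioi q, y * f y := by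
    have h1 : ∫ y in Ioi q, (fun y : ℝ => y) y ∂(Measure.map Y μ) =
        ∫ ω in Y ⁻¹' (Ioi q), Y ω ∂μ :=
      setIntegral_map measurableSet_Ioi aestronglyMeasurable_id hY.aemeasurable
    have h2 : Y ⁻¹' (Ioi q) = {ω | q < Y ω} := rfl
    rw [h2] at h1
    rw [← h1, hmap, hν, hofealt, restrict_withDensity measurableSet_Ioi,
      integral_withDensity_eq_integral_smul₀ (htoNN.restrict)]
    refine setIntegral_congr_fun measurableSet_Ioi fun y _ => ?_
    rw [NNReal.smul_def, smul_eq_mul, Real.coe_toNNReal _ (hf0 y), mul_comm]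
  refine ⟨hint_f, hsum, hIicq, hmean, hSne, hSbdd, ?_⟩
  simp only [condMeanAbove]
  rw [hInt, hTail, hcompl, ENNReal.toReal_ofReal (by linarith)]

theorem stmt5 {Ω : Type*} [MeasurableSpace Ω] (μ : Measure Ω) [IsProbabilityMeasure μ]
    (Y₁ Y₀ : Ω → ℝ) (R₁ R₀ : Ω → Bool) (f₁ f₀ : ℝ → ℝ) (Δ α c₁ c₀ : ℝ)
    (hY₁ : Measurable Y₁) (hY₀ : Measurable Y₀) (hR₁ : Measurable R₁) (hR₀ : Measurable R₀)
    (hf₁0 : ∀ y, 0 ≤ f₁ y) (hf₀0 : ∀ y, 0 ≤ f₀ y)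
    (hY₁d : ∀ x, μ {ω | Y₁ ω ≤ x} = ENNReal.ofReal (∫ y in Iic x, f₁ y))
    (hY₀d : ∀ x, μ {ω | Y₀ ω ≤ x} = ENNReal.ofReal (∫ y in Iic x, f₀ y))
    (hm₁ : Integrable (fun y => y * f₁ y)) (hm₀ : Integrable (fun y => y * f₀ y))
    (hshift : ∀ y, f₀ y = f₁ (y + Δ))
    (hα : α ∈ Ioo (0:ℝ) 1)
    (hp₁ : (μ {ω | R₁ ω = false}).toReal < α)
    (hp₀ : (μ {ω | R₀ ω = false}).toReal < α)
    (F₁ F₀ : ℝ → ℝ)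
    (hF₁ : F₁ = fun x => (μ {ω | Y₁ ω ≤ x}).toReal)
    (hF₀ : F₀ = fun x => (μ {ω | Y₀ ω ≤ x}).toReal)
    (hMNAR₁ : ∀ᵐ ω ∂μ, R₁ ω = false → Y₁ ω < quant F₁ α)
    (hMNAR₀ : ∀ᵐ ω ∂μ, R₀ ω = false → Y₀ ω < quant F₀ α)
    (hc₁ : c₁ < quant F₁ α) (hc₀ : c₀ < quant F₀ α)
    (U₁ U₀ : Ω → ℝ)
    (hU₁ : U₁ = fun ω => if R₁ ω then Y₁ ω else c₁)
    (hU₀ : U₀ = fun ω => if R₀ ω then Y₀ ω else c₀)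
    (FU₁ FU₀ : ℝ → ℝ)
    (hFU₁ : FU₁ = fun x => (μ {ω | U₁ ω ≤ x}).toReal)
    (hFU₀ : FU₀ = fun x => (μ {ω | U₀ ω ≤ x}).toReal) :
    condMeanAbove μ U₁ (quant FU₁ α) - condMeanAbove μ U₀ (quant FU₀ α)
      = (∫ ω, Y₁ ω ∂μ) - ∫ ω, Y₀ ω ∂μ := by
  obtain ⟨hf₁int, hf₁sum, hf₁Iic, hmean₁, hSne₁, hSbdd₁, hcm₁⟩ :=
    arm μ Y₁ R₁ f₁ α c₁ hY₁ hR₁ hf₁0 hY₁d hm₁ hα F₁ hF₁ hMNAR₁ hc₁ U₁ hU₁ FU₁ hFU₁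
  obtain ⟨hf₀int, hf₀sum, hf₀Iic, hmean₀, hSne₀, hSbdd₀, hcm₀⟩ :=
    arm μ Y₀ R₀ f₀ α c₀ hY₀ hR₀ hf₀0 hY₀d hm₀ hα F₀ hF₀ hMNAR₀ hc₀ U₀ hU₀ FU₀ hFU₀
  obtain ⟨hα0, hα1⟩ := hα
  have h1α : (1:ℝ) - α ≠ 0 := by linarith
  have hFeq : F₀ = fun x => F₁ (x + Δ) := by
    funext x
    rw [hF₀, hF₁]
    simp only
    congr 1
    rw [hY₀d, hY₁d]
    congr 1
    calc ∫ y in Iic x, f₀ y = ∫ y in Iic x, f₁ (y + Δ) := by simp_rw [hshift]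
    _ = ∫ y in Iic (x + Δ), f₁ y :=
      integral_shift f₁ Δ (Iic x) measurableSet_Iic (Iic (x + Δ)) measurableSet_Iic
        (fun y => by simp)
  have hq₀ : quant F₀ α = quant F₁ α - Δ := by
    rw [hFeq]
    exact quant_shift F₁ α Δ hSne₁ hSbdd₁
  set q₁ := quant F₁ α with hq₁def
  have hIoi₁ : ∫ y in Ioi q₁, f₁ y = 1 - α := by
    have h1 := integral_add_compl (μ := volume) measurableSet_Iic hf₁int (s := Iic q₁)
    rw [compl_Iic, hf₁Iic, hf₁sum] at h1
    linarith
  have hIoiY : ∫ y in Ioi (quant F₀ α), y * f₀ y = (∫ y in Ioi q₁, y * f₁ y) - Δ * (1 - α) := by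
    rw [hq₀]
    calc ∫ y in Ioi (q₁ - Δ), y * f₀ y
        = ∫ y in Ioi (q₁ - Δ), (fun z => (z - Δ) * f₁ z) (y + Δ) := by
          refine setIntegral_congr_fun measurableSet_Ioi fun y _ => ?_
          simp only [add_sub_cancel_right]
          rw [hshift y]
    _ = ∫ z in Ioi q₁, (z - Δ) * f₁ z :=
      integral_shift (fun z => (z - Δ) * f₁ z) Δ (Ioi (q₁ - Δ)) measurableSet_Ioi
        (Ioi q₁) measurableSet_Ioi (fun y => by simp [sub_lt_iff_lt_add])
    _ = (∫ z in Ioi q₁, z * f₁ z) - Δ * (1 - α) := by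
      have hi1 : IntegrableOn (fun z => z * f₁ z) (Ioi q₁) := hm₁.integrableOn
      have hi2 : IntegrableOn (fun z => Δ * f₁ z) (Ioi q₁) := (hf₁int.const_mul Δ).integrableOn
      have hfe : (fun z : ℝ => (z - Δ) * f₁ z) = fun z => z * f₁ z - Δ * f₁ z :=
        funext fun z => by ring
      rw [hfe, integral_sub hi1 hi2, integral_const_mul, hIoi₁]
  have hmean₀' : ∫ y, y * f₀ y = (∫ y, y * f₁ y) - Δ := by
    calc ∫ y, y * f₀ y = ∫ y, (fun z => (z - Δ) * f₁ z) (y + Δ) := by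
          congr 1
          funext y
          simp only [add_sub_cancel_right]
          rw [hshift y]
    _ = ∫ z, (z - Δ) * f₁ z := integral_add_right_eq_self (fun z => (z - Δ) * f₁ z) Δ
    _ = (∫ z, z * f₁ z) - Δ := by
      have hfe : (fun z : ℝ => (z - Δ) * f₁ z) = fun z => z * f₁ z - Δ * f₁ z :=
        funext fun z => by ring
      rw [hfe, integral_sub hm₁ (hf₁int.const_mul Δ), integral_const_mul, hf₁sum]
      ring
  rw [hcm₁, hcm₀, hmean₁, hmean₀, hIoiY, hmean₀']
  field_simp
  ring
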